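/- arXiv:2105.02910 — 3 statements merged into one kernel-verified Lean document; each statement's English description precedes it below -/
import Mathlib

section
/- A connected graph G with DFS tree T rooted at r is 2-edge-connected if and only if for every vertex v ≠ r the set B(v) of back-edges covering the tree-edge (v, p(v)) is nonempty. -/
variable {V E : Type}

/-- Reachability in the multigraph with edge-endpoint map `ends`,
avoiding (i.e. after deleting) the edges in `S`. -/
def Reach (ends : E → V × V) (S : Set E) : V → V → Prop :=
  Relation.ReflTransGen (fun a b => ∃ e, e ∉ S ∧ (ends e = (a, b) ∨ ends e = (b, a)))

/-- The multigraph is connected. -/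
def Connected (ends : E → V × V) : Prop := ∀ u v : V, Reach ends ∅ u v

/-- `u` and `v` are `k`-edge-connected: no set of at most `k - 1` edges separates them. -/
def KConn (ends : E → V × V) (k : ℕ) (u v : V) : Prop :=
  ∀ S : Finset E, S.card ≤ k - 1 → Reach ends (↑S) u v

/-- The multigraph is `k`-edge-connected: no edge cut of size less than `k`. -/
def GraphKConn (ends : E → V × V) (k : ℕ) : Prop :=
  ∀ S : Finset E, S.card < k → ∀ u v : V, Reach ends (↑S) u v

/-- `S` is an edge cut: removing it disconnects the graph. -/
def IsCutSet (ends : E → V × V) (S : Set E) : Prop :=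
  ∃ u v : V, ¬ Reach ends S u v

/-- A (candidate) DFS tree on the multigraph `ends : E → V × V`: a root, a parent
function, a choice of a tree edge for each non-root vertex, and a preorder numbering. -/
structure DFSTree (V E : Type) where
  ends : E → V × V
  root : V
  parent : V → V
  treeEdge : V → E
  pre : V → ℕ

namespace DFSTree

variable (t : DFSTree V E)

/-- `t.Anc a b` : `a` is an ancestor of `b` (every vertex is an ancestor of itself). -/
def Anc (a b : V) : Prop :=
  Relation.ReflTransGen (fun x y => x ≠ t.root ∧ y = t.parent x) b a

/-- `a` is a proper ancestor of `b`. -/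
def ProperAnc (a b : V) : Prop := t.Anc a b ∧ a ≠ b

def IsTreeEdge (e : E) : Prop := ∃ v, v ≠ t.root ∧ e = t.treeEdge v

/-- The set `B(v)`: back-edges `(x, y)` with `x` a descendant of `v` and `y` a
proper ancestor of `v`. -/
def B (v : V) : Set E :=
  {e | ¬ t.IsTreeEdge e ∧ t.Anc v (t.ends e).1 ∧ t.ProperAnc (t.ends e).2 v}

/-- `m` is the nearest common ancestor of the set `S` of vertices. -/
def IsNCA (S : Set V) (m : V) : Prop :=
  (∀ x ∈ S, t.Anc m x) ∧ ∀ m' : V, (∀ x ∈ S, t.Anc m' x) → t.Anc m' m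

/-- `m = M(v)`: the nearest common ancestor of all lower ends of back-edges in `B(v)`. -/
def IsM (v m : V) : Prop := t.IsNCA {x | ∃ e ∈ t.B v, (t.ends e).1 = x} m

/-- `h = high(v)`: the highest (in preorder) upper end of a back-edge in `B(v)`. -/
def IsHigh (v h : V) : Prop :=
  (∃ e ∈ t.B v, (t.ends e).2 = h) ∧ ∀ e ∈ t.B v, t.pre (t.ends e).2 ≤ t.pre h

/-- `l = low(v)`: the lowest (in preorder) upper end of a back-edge in `B(v)`. -/
def IsLow (v l : V) : Prop :=
  (∃ e ∈ t.B v, (t.ends e).2 = l) ∧ ∀ e ∈ t.B v, t.pre l ≤ t.pre (t.ends e).2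

/-- `v` and `w` have the same `M`-value. -/
def SameM (v w : V) : Prop := ∃ m, t.IsM v m ∧ t.IsM w m

/-- `n = nextM(v)`: the greatest vertex smaller than `v` with the same `M`-value. -/
def IsNextM (v n : V) : Prop :=
  t.pre n < t.pre v ∧ t.SameM v n ∧
    ∀ z, t.pre z < t.pre v → t.SameM v z → t.pre z ≤ t.pre n

/-- `l = lastM(v)`: the smallest vertex with the same `M`-value as `v`. -/
def IsLastM (v l : V) : Prop :=
  t.SameM v l ∧ ∀ z, t.SameM v z → t.pre l ≤ t.pre z

/-- `t` really is a DFS spanning tree of the connected multigraph `ends`. -/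
structure IsDFS : Prop where
  conn : Connected t.ends
  parent_root : t.parent t.root = t.root
  tree_ends : ∀ v, v ≠ t.root → t.ends (t.treeEdge v) = (v, t.parent v)
  treeEdge_inj : ∀ v w, v ≠ t.root → w ≠ t.root → t.treeEdge v = t.treeEdge w → v = w
  back : ∀ e, ¬ t.IsTreeEdge e → t.Anc (t.ends e).2 (t.ends e).1
  pre_inj : Function.Injective t.pre
  pre_mono : ∀ a b, t.Anc a b → t.pre a ≤ t.pre b
  pre_interval : ∀ a b : V,
    t.pre a ≤ t.pre b → t.pre b < t.pre a + {x | t.Anc a x}.ncard → t.Anc a b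

end DFSTree

section Aux

variable (t : DFSTree V E)

lemma aux_anc_refl (a : V) : t.Anc a a := Relation.ReflTransGen.refl

lemma aux_anc_trans {a b c : V} (h1 : t.Anc a b) (h2 : t.Anc b c) : t.Anc a c :=
  Relation.ReflTransGen.trans h2 h1

lemma aux_anc_parent {v : V} (hv : v ≠ t.root) : t.Anc (t.parent v) v :=
  Relation.ReflTransGen.single ⟨hv, rfl⟩

lemma aux_anc_root_eq {v : V} (h : t.Anc v t.root) : v = t.root := by
  rcases Relation.ReflTransGen.cases_head h with h | ⟨c, hc, _⟩
  · exact h.symm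
  · exact absurd rfl hc.1

lemma aux_anc_step {u v : V} (h : t.Anc v u) (hne : u ≠ v) : t.Anc v (t.parent u) := by
  rcases Relation.ReflTransGen.cases_head h with h | ⟨c, hc, hrest⟩
  · exact absurd h hne
  · rwa [← hc.2]

lemma aux_rtg_comparable {α : Type} {R : α → α → Prop}
    (hfun : ∀ a b c, R a b → R a c → b = c) {s a b : α}
    (hsa : Relation.ReflTransGen R s a) (hsb : Relation.ReflTransGen R s b) :
    Relation.ReflTransGen R a b ∨ Relation.ReflTransGen R b a := by
  revert hsa
  induction hsb using Relation.ReflTransGen.head_induction_on with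
  | refl => intro hsa; exact Or.inr hsa
  | head hpq hqb ih =>
    intro hsa
    rcases Relation.ReflTransGen.cases_head hsa with h | ⟨c, hpc, hca⟩
    · subst h; exact Or.inl (Relation.ReflTransGen.head hpq hqb)
    · have hqc := hfun _ _ _ hpq hpc
      subst hqc
      exact ih hca

lemma aux_anc_comparable {a b x : V} (ha : t.Anc a x) (hb : t.Anc b x) :
    t.Anc a b ∨ t.Anc b a :=
  (aux_rtg_comparable (fun _ _ _ h1 h2 => h1.2.trans h2.2.symm) ha hb).symm

lemma aux_root_anc (ht : t.IsDFS) (w : V) : t.Anc t.root w := by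
  have h := ht.conn t.root w
  unfold Reach at h
  induction h with
  | refl => exact aux_anc_refl t _
  | @tail b c _ hstep ih =>
    obtain ⟨e, -, hor⟩ := hstep
    by_cases hte : t.IsTreeEdge e
    · obtain ⟨u, hu, rfl⟩ := hte
      rw [ht.tree_ends u hu] at hor
      rcases hor with h | h
      · injection h with h1 h2
        subst h1; subst h2
        exact aux_anc_step t ih hu
      · injection h with h1 h2
        subst h1; subst h2
        exact aux_anc_trans t ih (aux_anc_parent t hu)
    · have hback := ht.back e hte
      rcases hor with h | h
      · rw [h] at hback
        have hback' : t.Anc c b := hback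
        rcases aux_anc_comparable t ih hback' with h' | h'
        · exact h'
        · rw [aux_anc_root_eq t h']
          exact aux_anc_refl t _
      · rw [h] at hback
        have hback' : t.Anc b c := hback
        exact aux_anc_trans t ih hback' 

lemma aux_pre_parent_lt (ht : t.IsDFS) {w : V} (hw : w ≠ t.root) :
    t.pre (t.parent w) < t.pre w := by
  have hle := ht.pre_mono _ _ (aux_anc_parent t hw)
  rcases lt_or_eq_of_le hle with h | h
  · exact h
  · exfalso
    have hp : t.parent w = w := ht.pre_inj h
    have hone : ∀ b, Relation.ReflTransGen
        (fun x y => x ≠ t.root ∧ y = t.parent x) w b → b = w := by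
      intro b hb
      induction hb with
      | refl => rfl
      | tail _ hstep ih => rw [hstep.2, ih]; exact hp
    exact hw ((hone t.root (aux_root_anc t ht w)).symm)

lemma aux_pre_lt (ht : t.IsDFS) {a b : V} (h : t.Anc a b) (hne : a ≠ b) :
    t.pre a < t.pre b :=
  lt_of_le_of_ne (ht.pre_mono a b h) (fun he => hne (ht.pre_inj he))

lemma aux_reach_symm {ends : E → V × V} {S : Set E} {a b : V} (h : Reach ends S a b) :
    Reach ends S b a := by
  unfold Reach at h ⊢
  induction h with
  | refl => exact Relation.ReflTransGen.refl
  | tail _ hstep ih =>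
    obtain ⟨e, he, hor⟩ := hstep
    exact Relation.ReflTransGen.head ⟨e, he, hor.symm⟩ ih

lemma aux_reach_down (ht : t.IsDFS) {w x : V} (hw : w ≠ t.root) (h : t.Anc w x) :
    Reach t.ends {t.treeEdge w} x w := by
  unfold DFSTree.Anc at h
  refine Relation.ReflTransGen.head_induction_on
    (motive := fun y _ => Reach t.ends {t.treeEdge w} y w) h ?_ ?_
  · exact Relation.ReflTransGen.refl
  · intro a c hstep hrest ih
    have haw : a ≠ w := by
      intro heq
      rw [heq] at hstep
      have h1 : t.Anc w (t.parent w) := by rw [← hstep.2]; exact hrest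
      have h2 := ht.pre_mono _ _ h1
      have h3 := aux_pre_parent_lt t ht hw
      omega
    refine Relation.ReflTransGen.head ⟨t.treeEdge a, ?_, Or.inl ?_⟩ ih
    · simp only [Set.mem_singleton_iff]
      intro hcontra
      exact haw (ht.treeEdge_inj a w hstep.1 hw hcontra)
    · rw [ht.tree_ends a hstep.1, hstep.2]

lemma aux_cross (ht : t.IsDFS) {v : V} (hB : ∀ e, e ∉ t.B v)
    {a b : V} (e : E) (he : e ≠ t.treeEdge v) (hends : t.ends e = (a, b))
    (ha : t.Anc v a) : t.Anc v b := by
  by_cases hte : t.IsTreeEdge e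
  · obtain ⟨u, hu, rfl⟩ := hte
    rw [ht.tree_ends u hu] at hends
    injection hends with h1 h2
    subst h1; subst h2
    exact aux_anc_step t ha (fun h => he (by rw [h]))
  · have hback := ht.back e hte
    rw [hends] at hback
    rcases aux_anc_comparable t ha hback with h | h
    · exact h
    · by_cases hbv : b = v
      · rw [hbv]; exact aux_anc_refl t v
      · exfalso
        apply hB e
        have hmem : ¬t.IsTreeEdge e ∧ t.Anc v (t.ends e).1 ∧ t.ProperAnc (t.ends e).2 v := by
          refine ⟨hte, ?_, ?_⟩
          · rw [hends]; exact ha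
          · rw [hends]; exact show t.Anc b v ∧ b ≠ v from ⟨h, hbv⟩
        exact hmem


lemma aux_cross' (ht : t.IsDFS) {v : V}
    {a b : V} (e : E) (hends : t.ends e = (a, b))
    (hb : t.Anc v b) : t.Anc v a := by
  by_cases hte : t.IsTreeEdge e
  · obtain ⟨u, hu, rfl⟩ := hte
    rw [ht.tree_ends u hu] at hends
    injection hends with h1 h2
    subst h1; subst h2
    exact aux_anc_trans t hb (aux_anc_parent t hu)
  · have hback := ht.back e hte
    rw [hends] at hback
    exact aux_anc_trans t hb hback

end Aux

/-- A connected graph with DFS tree `t` rooted at `r` is 2-edge-connected iff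
`B(v)` is nonempty for every vertex `v ≠ r`. -/
theorem two_edge_connected_iff_B_nonempty (t : DFSTree V E) (ht : t.IsDFS) :
    GraphKConn t.ends 2 ↔ ∀ v : V, v ≠ t.root → (t.B v).Nonempty := by
  constructor
  · intro h2 v hv
    by_contra hBne
    have hB : ∀ e, e ∉ t.B v := fun e he => hBne ⟨e, he⟩
    have hreach := h2 {t.treeEdge v} (by simp) v t.root
    rw [Finset.coe_singleton] at hreach
    have inv : ∀ b : V, Reach t.ends {t.treeEdge v} v b → t.Anc v b := by
      intro b h
      unfold Reach at h
      induction h with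
      | refl => exact aux_anc_refl t v
      | tail _ hstep ih =>
        obtain ⟨e, he, hor⟩ := hstep
        rw [Set.mem_singleton_iff] at he
        rcases hor with h | h
        · exact aux_cross t ht hB e he h ih
        · exact aux_cross' t ht e h ih
    exact hv (aux_anc_root_eq t (inv t.root hreach))
  · intro hB S hS u v
    by_cases hSe : S = ∅
    · subst hSe
      rw [Finset.coe_empty]
      exact ht.conn u v
    · obtain ⟨e, he⟩ := Finset.nonempty_iff_ne_empty.mpr hSe
      have hScard : S.card ≤ 1 := by omega
      have hSsing : S = {e} := by
        apply Finset.eq_singleton_iff_unique_mem.mpr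
        exact ⟨he, fun x hx => Finset.card_le_one.mp hScard x hx e he⟩
      rw [hSsing, Finset.coe_singleton]
      have main : ∀ n (w : V), t.pre w < n → Reach t.ends {e} w t.root := by
        intro n
        induction n with
        | zero => intro w h; omega
        | succ n ih =>
          intro w hw
          by_cases hwr : w = t.root
          · subst hwr; exact Relation.ReflTransGen.refl
          · by_cases hte : t.treeEdge w = e
            · obtain ⟨f, hf⟩ := hB w hwr
              have hf' : ¬t.IsTreeEdge f ∧ t.Anc w (t.ends f).1 ∧
                  t.Anc (t.ends f).2 w ∧ (t.ends f).2 ≠ w := hf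
              have hfe : f ≠ e := by
                rintro rfl
                exact hf'.1 ⟨w, hwr, hte.symm⟩
              have h1 : Reach t.ends {e} w (t.ends f).1 := by
                have hd := aux_reach_down t ht hwr hf'.2.1
                rw [hte] at hd
                exact aux_reach_symm hd
              have h2 : Reach t.ends {e} (t.ends f).1 (t.ends f).2 :=
                Relation.ReflTransGen.single ⟨f, by simpa using hfe, Or.inl rfl⟩
              have h3 : Reach t.ends {e} (t.ends f).2 t.root := by
                apply ih
                have := aux_pre_lt t ht hf'.2.2.1 hf'.2.2.2
                omega
              exact (Relation.ReflTransGen.trans h1 h2).trans h3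
            · have hstep : Reach t.ends {e} w (t.parent w) :=
                Relation.ReflTransGen.single
                  ⟨t.treeEdge w, by simpa using hte, Or.inl (ht.tree_ends w hwr)⟩
              have hlt := aux_pre_parent_lt t ht hwr
              exact Relation.ReflTransGen.trans hstep (ih (t.parent w) (by omega))
      exact Relation.ReflTransGen.trans (main _ u (Nat.lt_succ_self _))
        (aux_reach_symm (main _ v (Nat.lt_succ_self _)))
end

section
/- Let T be a DFS tree of a connected graph G, let v be an ancestor of u in T, and suppose M(v) is a descendant of u. Then B(v) ⊆ B(u); in particular, M(v) is a descendant of M(u). -/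
variable {V E : Type}

/-- If `v` is an ancestor of `u` and `M(v)` is a descendant of `u`, then
`B(v) ⊆ B(u)`; in particular `M(v)` is a descendant of `M(u)`. -/
theorem B_subset_of_M_descendant (t : DFSTree V E) (ht : t.IsDFS)
    (u v mu mv : V) (hvu : t.Anc v u)
    (hMu : t.IsM u mu) (hMv : t.IsM v mv) (hdesc : t.Anc u mv) :
    t.B v ⊆ t.B u ∧ t.Anc mu mv := by
  have htrans : ∀ a b c : V, t.Anc a b → t.Anc b c → t.Anc a c := fun a b c h1 h2 =>
    Relation.ReflTransGen.trans h2 h1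
  have hantisym : ∀ a b : V, t.Anc a b → t.Anc b a → a = b := fun a b h1 h2 =>
    ht.pre_inj (le_antisymm (ht.pre_mono a b h1) (ht.pre_mono b a h2))
  have hsub : t.B v ⊆ t.B u := by
    intro e he
    obtain ⟨hnt, hx, hy, hyne⟩ := he
    refine ⟨hnt, ?_, ?_, ?_⟩
    · -- u anc x : u anc mv anc x
      exact htrans _ _ _ hdesc (hMv.1 _ ⟨e, ⟨hnt, hx, hy, hyne⟩, rfl⟩)
    · exact htrans _ _ _ hy hvu
    · intro hcontr
      apply hyne
      rw [hcontr]
      exact hantisym u v (hcontr ▸ hy) hvu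
  refine ⟨hsub, ?_⟩
  exact hMv.2 mu (fun x hx => by
    obtain ⟨e, he, rfl⟩ := hx
    exact hMu.1 _ ⟨e, hsub he, rfl⟩)
end

section
/- Let T be a DFS tree of a connected graph G and let u be a proper descendant of v with M(u) = M(v). Then B(v) ⊆ B(u). If moreover G is 3-edge-connected, then the inclusion is strict: B(v) ⊊ B(u). -/
variable {V E : Type}

namespace DFSTree

variable {t : DFSTree V E} {a b c x w : V}

lemma anc_trans (h1 : t.Anc a b) (h2 : t.Anc b c) : t.Anc a c :=
  Relation.ReflTransGen.trans h2 h1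

lemma anc_refl : t.Anc a a := Relation.ReflTransGen.refl

lemma anc_antisymm (ht : t.IsDFS) (h1 : t.Anc a b) (h2 : t.Anc b a) : a = b :=
  ht.pre_inj (le_antisymm (ht.pre_mono _ _ h1) (ht.pre_mono _ _ h2))

lemma anc_parent (hw : w ≠ t.root) : t.Anc (t.parent w) w :=
  Relation.ReflTransGen.single ⟨hw, rfl⟩

lemma anc_of_anc_parent (hw : w ≠ t.root) (h : t.Anc a (t.parent w)) : t.Anc a w :=
  Relation.ReflTransGen.head ⟨hw, rfl⟩ h

lemma anc_parent_of_anc (h : t.Anc a w) (hne : a ≠ w) : t.Anc a (t.parent w) := by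
  rcases h.cases_head with heq | ⟨d, ⟨_, hd⟩, hrest⟩
  · exact absurd heq.symm hne
  · exact hd ▸ hrest

lemma anc_comparable (h1 : t.Anc a x) (h2 : t.Anc b x) : t.Anc a b ∨ t.Anc b a := by
  induction h1 with
  | refl => exact Or.inr h2
  | tail hc hstep ih =>
    obtain ⟨hcr, rfl⟩ := hstep
    rcases ih with hcb | hbc
    · exact Or.inl (anc_trans (anc_parent hcr) hcb)
    · rcases hbc.cases_head with heq | ⟨d, ⟨_, hd⟩, hrest⟩
      · exact Or.inl (heq ▸ anc_parent hcr)
      · exact Or.inr (hd ▸ hrest)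

end DFSTree

/-- If `u` is a proper descendant of `v` with `M(u) = M(v)` then `B(v) ⊆ B(u)`;
if moreover the graph is 3-edge-connected, the inclusion is strict. -/
theorem B_ssubset_of_proper_descendant_same_M (t : DFSTree V E) (ht : t.IsDFS)
    (u v m : V) (h : t.ProperAnc v u) (hMu : t.IsM u m) (hMv : t.IsM v m) :
    t.B v ⊆ t.B u ∧ (GraphKConn t.ends 3 → t.B v ⊂ t.B u) := by
  classical
  obtain ⟨hvu, hvne⟩ := h
  have hum : t.Anc u m := hMu.2 u (by rintro x ⟨e, he, rfl⟩; exact he.2.1)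
  have hsub : t.B v ⊆ t.B u := by
    rintro e ⟨hnt, hx, hy⟩
    refine ⟨hnt, DFSTree.anc_trans hum (hMv.1 _ ⟨e, ⟨hnt, hx, hy⟩, rfl⟩),
      DFSTree.anc_trans hy.1 hvu, fun heq => ?_⟩
    exact hvne (DFSTree.anc_antisymm ht hvu (heq ▸ hy.1))
  refine ⟨hsub, fun h3 => hsub.ssubset_of_ne fun hBeq => ?_⟩
  set S : Finset E := {t.treeEdge u, t.treeEdge v} with hS
  have hcard : S.card < 3 := by
    calc S.card ≤ 2 := (Finset.card_insert_le _ _).trans (by simp)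
    _ < 3 := by omega
  have hreach : Reach t.ends ↑S v u := h3 S hcard v u
  -- Closedness of the set {z | Anc v z ∧ ¬ Anc u z} under edges not in S
  have closed : ∀ a b : V, (∃ e, e ∉ (↑S : Set E) ∧
      (t.ends e = (a, b) ∨ t.ends e = (b, a))) →
      (t.Anc v a ∧ ¬ t.Anc u a) → (t.Anc v b ∧ ¬ t.Anc u b) := by
    rintro a b ⟨e, heS, hab⟩ ⟨hva, hua⟩
    have heu : e ≠ t.treeEdge u := fun hh => heS (by simp [hS, hh])
    have hev : e ≠ t.treeEdge v := fun hh => heS (by simp [hS, hh])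
    by_cases hte : t.IsTreeEdge e
    · obtain ⟨w, hwr, rfl⟩ := hte
      have hends := ht.tree_ends w hwr
      have hwu : w ≠ u := fun hh => heu (hh ▸ rfl)
      have hwv : w ≠ v := fun hh => hev (hh ▸ rfl)
      rcases hab with hab | hab <;> rw [hends, Prod.mk.injEq] at hab <;>
        obtain ⟨h1, h2⟩ := hab
      · -- w = a, parent w = b
        refine ⟨?_, fun hub => ?_⟩
        · have : t.Anc v (t.parent w) :=
            DFSTree.anc_parent_of_anc (h1 ▸ hva) (fun hh => hwv hh.symm)
          exact h2 ▸ this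
        · exact hua (h1 ▸ DFSTree.anc_of_anc_parent hwr (h2 ▸ hub))
      · -- w = b, parent w = a
        refine ⟨?_, fun hub => ?_⟩
        · exact h1 ▸ DFSTree.anc_of_anc_parent hwr (h2 ▸ hva)
        · have : t.Anc u (t.parent w) :=
            DFSTree.anc_parent_of_anc (h1 ▸ hub) (fun hh => hwu hh.symm)
          exact hua (h2 ▸ this)
    · have hback := ht.back e hte
      rcases hab with hab | hab
      · -- ends e = (a, b) : a lower end, b upper end
        rw [hab] at hback
        simp only at hback
        refine ⟨?_, fun hub => hua (DFSTree.anc_trans hub hback)⟩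
        by_contra hvb
        have hbv : t.Anc b v := by
          rcases DFSTree.anc_comparable (t := t) hback hva with h4 | h4
          · exact h4
          · exact absurd h4 hvb
        have heBv : e ∈ t.B v := ⟨hte, by rw [hab]; exact hva,
          by rw [hab]; exact ⟨hbv, fun hh => hvb (hh ▸ DFSTree.anc_refl)⟩⟩
        have heBu : e ∈ t.B u := hBeq ▸ heBv
        have := heBu.2.1
        rw [hab] at this
        exact hua this
      · -- ends e = (b, a) : b lower end, a upper end
        rw [hab] at hback
        simp only at hback
        refine ⟨DFSTree.anc_trans hva hback, fun hub => ?_⟩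
        have hau : t.Anc a u := by
          rcases DFSTree.anc_comparable (t := t) hub hback with h4 | h4
          · exact absurd h4 hua
          · exact h4
        have heBu : e ∈ t.B u := ⟨hte, by rw [hab]; exact hub,
          by rw [hab]; exact ⟨hau, fun hh => hua (hh ▸ DFSTree.anc_refl)⟩⟩
        have heBv : e ∈ t.B v := hBeq ▸ heBu
        have hav : t.Anc a v ∧ a ≠ v := by
          have := heBv.2.2; rw [hab] at this; exact this
        exact hav.2 (DFSTree.anc_antisymm ht hav.1 hva)
  have key : ∀ z, Reach t.ends ↑S v z → t.Anc v z ∧ ¬ t.Anc u z := by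
    intro z hz
    have hz' : Relation.ReflTransGen
        (fun a b => ∃ e, e ∉ (↑S : Set E) ∧ (t.ends e = (a, b) ∨ t.ends e = (b, a))) v z := hz
    clear hz
    induction hz' with
    | refl => exact ⟨DFSTree.anc_refl, fun hh =>
        hvne (DFSTree.anc_antisymm ht hvu hh)⟩
    | tail h1 h2 ih => exact closed _ _ h2 ih
  exact (key u hreach).2 DFSTree.anc_refl
end
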